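/- Let H be a digraph. If H contains a DAT (digraph asteroidal triple) with distinguished vertices a, b, c and directed paths P_1 from (a,b,c), P_2 from (b,a,c), P_3 from (c,a,b) in the pair/triple digraph Ĥ³ all ending at (α,β,β), then H admits no conservative majority polymorphism: for any conservative ternary polymorphism g of H with g(x,x,y)=g(x,y,x)=g(y,x,x)=x for all x,y, the existence of path P_1 forces g(a,b,c) ≠ a, path P_2 forces g(a,b,c) ≠ b, and path P_3 forces g(a,b,c) ≠ c, contradicting conservativity. -/
import Mathlib

private lemma stmt19_key {V : Type*} (A : V → V → Prop)
    (Arc3 : V × V × V → V × V × V → Prop)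
    (hArc3 : ∀ x y, Arc3 x y ↔
      ((A x.1 y.1 ∧ A x.2.1 y.2.1 ∧ A x.2.2 y.2.2 ∧ ¬ A x.1 y.2.1 ∧ ¬ A x.1 y.2.2) ∨
       (A y.1 x.1 ∧ A y.2.1 x.2.1 ∧ A y.2.2 x.2.2 ∧ ¬ A y.2.1 x.1 ∧ ¬ A y.2.2 x.1)))
    (f : V × V × V → V)
    (hpoly : ∀ x y : V × V × V, A x.1 y.1 → A x.2.1 y.2.1 → A x.2.2 y.2.2 → A (f x) (f y))
    (hcons : ∀ x : V × V × V, f x = x.1 ∨ f x = x.2.1 ∨ f x = x.2.2)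
    {x y : V × V × V} (h : Relation.ReflTransGen Arc3 x y) (hy : f y ≠ y.1) :
    f x ≠ x.1 := by
  induction h with
  | refl => exact hy
  | tail hpath harc ih =>
    rename_i b cc
    apply ih
    intro hb
    apply hy
    rw [hArc3] at harc
    rcases harc with ⟨h1, h2, h3, h4, h5⟩ | ⟨h1, h2, h3, h4, h5⟩
    · have := hpoly b cc h1 h2 h3
      rw [hb] at this
      rcases hcons cc with h | h | h
      · exact h
      · exact absurd (h ▸ this) h4
      · exact absurd (h ▸ this) h5
    · have := hpoly cc b h1 h2 h3
      rw [hb] at this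
      rcases hcons cc with h | h | h
      · exact h
      · exact absurd (h ▸ this) h4
      · exact absurd (h ▸ this) h5

/-- If a digraph `H` contains a DAT — directed paths `P₁` from `(a,b,c)`,
`P₂` from `(b,a,c)`, `P₃` from `(c,a,b)` in the triple digraph `Ĥ³` all ending at
`(α,β,β)`, where `(α,β)` is an invertible pair (in particular `α ≠ β`) — then `H` admits
no conservative majority polymorphism. -/
theorem stmt_19 {V : Type*} (A : V → V → Prop)
    (Arc2 : V × V → V × V → Prop)
    (hArc2 : ∀ x y, Arc2 x y ↔
      ((A x.1 y.1 ∧ A x.2 y.2 ∧ ¬ A x.1 y.2) ∨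
       (A y.1 x.1 ∧ A y.2 x.2 ∧ ¬ A y.2 x.1)))
    (Arc3 : V × V × V → V × V × V → Prop)
    (hArc3 : ∀ x y, Arc3 x y ↔
      ((A x.1 y.1 ∧ A x.2.1 y.2.1 ∧ A x.2.2 y.2.2 ∧ ¬ A x.1 y.2.1 ∧ ¬ A x.1 y.2.2) ∨
       (A y.1 x.1 ∧ A y.2.1 x.2.1 ∧ A y.2.2 x.2.2 ∧ ¬ A y.2.1 x.1 ∧ ¬ A y.2.2 x.1)))
    (a b c α β : V) (hαβ : α ≠ β)
    (hinv1 : Relation.ReflTransGen Arc2 (α, β) (β, α))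
    (hinv2 : Relation.ReflTransGen Arc2 (β, α) (α, β))
    (hP1 : Relation.ReflTransGen Arc3 (a, b, c) (α, β, β))
    (hP2 : Relation.ReflTransGen Arc3 (b, a, c) (α, β, β))
    (hP3 : Relation.ReflTransGen Arc3 (c, a, b) (α, β, β)) :
    ¬ ∃ g : V → V → V → V,
        (∀ x1 x2 x3 y1 y2 y3, A x1 y1 → A x2 y2 → A x3 y3 →
          A (g x1 x2 x3) (g y1 y2 y3)) ∧
        (∀ x y z, g x y z = x ∨ g x y z = y ∨ g x y z = z) ∧
        (∀ x y, g x x y = x ∧ g x y x = x ∧ g y x x = x) := by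
  rintro ⟨g, hpoly, hcons, hmaj⟩
  have k1 := stmt19_key A Arc3 hArc3 (fun t => g t.1 t.2.1 t.2.2)
    (fun x y h1 h2 h3 => hpoly _ _ _ _ _ _ h1 h2 h3)
    (fun x => hcons _ _ _) hP1
    (by simpa [(hmaj β α).2.2] using hαβ.symm)
  have k2 := stmt19_key A Arc3 hArc3 (fun t => g t.2.1 t.1 t.2.2)
    (fun x y h1 h2 h3 => hpoly _ _ _ _ _ _ h2 h1 h3)
    (fun x => by rcases hcons x.2.1 x.1 x.2.2 with h | h | h <;> tauto) hP2
    (by simpa [(hmaj β α).2.1] using hαβ.symm)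
  have k3 := stmt19_key A Arc3 hArc3 (fun t => g t.2.1 t.2.2 t.1)
    (fun x y h1 h2 h3 => hpoly _ _ _ _ _ _ h2 h3 h1)
    (fun x => by rcases hcons x.2.1 x.2.2 x.1 with h | h | h <;> tauto) hP3
    (by simpa [(hmaj β α).1] using hαβ.symm)
  simp only at k1 k2 k3
  rcases hcons a b c with h | h | h
  · exact k1 h
  · exact k2 h
  · exact k3 h
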